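/- Let p be a prime, n ≥ 1, G a group, ρ : G → GL_n(ℤ_p) a group homomorphism with mod-p reduction ρ̄ : G → GL_n(𝔽_p), and i ≥ 1 an integer. Then Φ_i(ρ) is an additive subgroup of M_n(𝔽_p), and it is stable under the adjoint action: for every g ∈ G and A ∈ Φ_i(ρ), the matrix ρ̄(g)·A·ρ̄(g)^{−1} belongs to Φ_i(ρ). -/

import Mathlib

/-- `Φ_i(ρ)`: the set of matrices `A ∈ M_n(𝔽_p)` such that there exist `g ∈ G` and
`B ∈ M_n(ℤ_p)` with `ρ(g) = 1 + p^i·B` and the mod-`p` reduction of `B` equal to `A`. -/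
def Phi (p : ℕ) [Fact p.Prime] (n : ℕ) {G : Type*} [Group G]
    (ρ : G →* Matrix.GeneralLinearGroup (Fin n) ℤ_[p]) (i : ℕ) :
    Set (Matrix (Fin n) (Fin n) (ZMod p)) :=
  {A | ∃ (g : G) (B : Matrix (Fin n) (Fin n) ℤ_[p]),
    (ρ g).val = 1 + ((p : ℤ_[p]) ^ i) • B ∧ B.map PadicInt.toZMod = A}

theorem stmt_9 (p : ℕ) [Fact p.Prime] (n : ℕ) (hn : 1 ≤ n)
    {G : Type*} [Group G] (ρ : G →* Matrix.GeneralLinearGroup (Fin n) ℤ_[p])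
    (i : ℕ) (hi : 1 ≤ i) :
    (0 ∈ Phi p n ρ i) ∧
    (∀ A B : Matrix (Fin n) (Fin n) (ZMod p),
      A ∈ Phi p n ρ i → B ∈ Phi p n ρ i → A + B ∈ Phi p n ρ i) ∧
    (∀ A : Matrix (Fin n) (Fin n) (ZMod p), A ∈ Phi p n ρ i → -A ∈ Phi p n ρ i) ∧
    (∀ (g : G) (A : Matrix (Fin n) (Fin n) (ZMod p)), A ∈ Phi p n ρ i →
      (Units.map (RingHom.mapMatrix (PadicInt.toZMod (p := p))).toMonoidHom (ρ g)).val * A *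
      ((Units.map (RingHom.mapMatrix (PadicInt.toZMod (p := p))).toMonoidHom (ρ g))⁻¹).val
        ∈ Phi p n ρ i) := by
  set c : ℤ_[p] := (p : ℤ_[p]) ^ i with hc
  set π : Matrix (Fin n) (Fin n) ℤ_[p] →+* Matrix (Fin n) (Fin n) (ZMod p) :=
    (PadicInt.toZMod (p := p)).mapMatrix with hπdef
  have hπ : ∀ X : Matrix (Fin n) (Fin n) ℤ_[p], X.map PadicInt.toZMod = π X :=
    fun X => rfl
  have hmapz : ∀ X : Matrix (Fin n) (Fin n) ℤ_[p], π (c • X) = 0 := by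
    intro X
    ext a b
    simp [hπdef, hc, Matrix.map_apply, Matrix.smul_apply, smul_eq_mul, map_mul, map_pow,
      ZMod.natCast_self, zero_pow (by omega : i ≠ 0)]
  have hmul : ∀ g : G, (ρ g).val * (ρ g⁻¹).val = 1 := by
    intro g
    rw [← Units.val_mul, ← map_mul, mul_inv_cancel, map_one, Units.val_one]
  refine ⟨⟨1, 0, by simp, by simp⟩, ?_, ?_, ?_⟩
  · rintro _ _ ⟨g, B, hB, rfl⟩ ⟨g', B', hB', rfl⟩
    refine ⟨g * g', B + B' + c • (B * B'), ?_, ?_⟩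
    · rw [map_mul, Units.val_mul, hB, hB']
      simp only [mul_add, add_mul, one_mul, mul_one, smul_mul_assoc, mul_smul_comm,
        smul_smul, smul_add]
      abel
    · simp [hπ, map_add, hmapz]
  · rintro _ ⟨g, B, hB, rfl⟩
    have h1 := hmul g
    rw [hB] at h1
    have hM : (ρ g⁻¹).val = 1 + c • (-(B * (ρ g⁻¹).val)) := by
      have h2 : (ρ g⁻¹).val + c • (B * (ρ g⁻¹).val) = 1 := by
        rw [← h1]; simp [add_mul, smul_mul_assoc, hc]
      rw [smul_neg, ← sub_eq_add_neg, eq_sub_iff_add_eq]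
      exact h2
    have hMbar : π ((ρ g⁻¹).val) = 1 := by
      rw [hM, map_add, map_one, hmapz, add_zero]
    refine ⟨g⁻¹, -(B * (ρ g⁻¹).val), hM, ?_⟩
    rw [hπ, map_neg, map_mul, hMbar, mul_one, hπ]
  · rintro g _ ⟨h, B, hB, rfl⟩
    refine ⟨g * h * g⁻¹, (ρ g).val * B * (ρ g⁻¹).val, ?_, ?_⟩
    · rw [map_mul, map_mul, Units.val_mul, Units.val_mul, hB]
      rw [mul_add, add_mul, mul_one, hmul g, mul_smul_comm, smul_mul_assoc]
    · rw [hπ, map_mul, map_mul, hπ B]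
      rw [map_inv ρ g]
      rfl
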